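/- For nonnegative integers k, p and a multi-index γ ∈ ℕ^{m₀} with |γ| = k−1+p, the identity Σ_{j=1}^{m₀} Σ α_j²/(α!β!) = (1/(k!p!))·(k² + (m₀−1)k)·((k−1+p)!/γ!) holds, where the inner sum runs over pairs of multi-indices α, β ∈ ℕ^{m₀} with |α| = k, |β| = p and α + β − σ_j = γ, σ_j being the j-th standard unit multi-index. -/

import Mathlib

open scoped BigOperators

open Finset


lemma sum_adT_succ {M : Type*} [AddCommMonoid M] (n a : ℕ) (f : (Fin (n+1) → ℕ) → M) :
    ∑ x ∈ Finset.Nat.antidiagonalTuple (n+1) a, f x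
      = ∑ ij ∈ Finset.HasAntidiagonal.antidiagonal a, ∑ x ∈ Finset.Nat.antidiagonalTuple n ij.2,
          f (Fin.cons ij.1 x) := by
  rw [Finset.sum_sigma']
  refine Finset.sum_nbij' (fun y => ⟨(y 0, ∑ i : Fin n, y i.succ), Fin.tail y⟩)
    (fun z => Fin.cons z.1.1 z.2) ?_ ?_ ?_ ?_ ?_
  · intro y hy
    rw [Finset.Nat.mem_antidiagonalTuple] at hy
    simp only [Finset.mem_sigma, Finset.HasAntidiagonal.mem_antidiagonal, Finset.Nat.mem_antidiagonalTuple]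
    refine ⟨by rw [← hy, Fin.sum_univ_succ], ?_⟩
    simp [Fin.tail]
  · intro z hz
    simp only [Finset.mem_sigma, Finset.HasAntidiagonal.mem_antidiagonal,
      Finset.Nat.mem_antidiagonalTuple] at hz ⊢
    rw [Fin.sum_univ_succ]
    simp only [Fin.cons_zero, Fin.cons_succ]
    rw [hz.2]
    exact hz.1
  · intro y hy; exact Fin.cons_self_tail y
  · intro z hz
    simp only [Finset.mem_sigma, Finset.HasAntidiagonal.mem_antidiagonal,
      Finset.Nat.mem_antidiagonalTuple] at hz
    refine Sigma.ext ?_ ?_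
    · simp [Fin.tail, hz.2, Prod.ext_iff]
    · simp [Fin.tail]
  · intro y hy; exact congrArg f (Fin.cons_self_tail y).symm

lemma choose_sum (n a : ℕ) (γ : Fin n → ℕ) :
    ∑ x ∈ Finset.Nat.antidiagonalTuple n a, ∏ i, (γ i).choose (x i)
      = (∑ i, γ i).choose a := by
  induction n generalizing a with
  | zero =>
    cases a with
    | zero => simp
    | succ a => simp
  | succ n ih =>
    rw [sum_adT_succ n a (fun x => ∏ i, (γ i).choose (x i)), Fin.sum_univ_succ,
      Nat.add_choose_eq]
    refine Finset.sum_congr rfl fun ij _ => ?_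
    rw [← ih ij.2 (fun i => γ i.succ), Finset.mul_sum]
    refine Finset.sum_congr rfl fun x _ => ?_
    rw [Fin.prod_univ_succ]
    simp

lemma prod_factorial_ne_zero {n : ℕ} (u : Fin n → ℕ) :
    (∏ i, ((u i).factorial : ℝ)) ≠ 0 :=
  Finset.prod_ne_zero_iff.mpr fun i _ => Nat.cast_ne_zero.mpr (Nat.factorial_ne_zero _)

lemma term_eq (n : ℕ) (u v : Fin n → ℕ) :
    (1:ℝ) / ((∏ i, ((u i).factorial : ℝ)) * ∏ i, ((v i).factorial : ℝ))
      = (∏ i, (((u i + v i).choose (u i) : ℕ) : ℝ)) /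
          ∏ i, (((u i + v i).factorial : ℕ) : ℝ) := by
  have h : ∀ i : Fin n, (((u i + v i).factorial : ℕ) : ℝ)
      = ((u i + v i).choose (u i) : ℝ) * (u i).factorial * (v i).factorial := by
    intro i
    have := Nat.choose_mul_factorial_mul_factorial (Nat.le_add_right (u i) (v i))
    rw [Nat.add_sub_cancel_left] at this
    exact_mod_cast this.symm
  rw [Finset.prod_congr rfl fun i _ => h i, Finset.prod_mul_distrib, Finset.prod_mul_distrib]
  have hC : (∏ i, (((u i + v i).choose (u i) : ℕ) : ℝ)) ≠ 0 :=
    Finset.prod_ne_zero_iff.mpr fun i _ => Nat.cast_ne_zero.mpr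
      (Nat.choose_pos (Nat.le_add_right _ _)).ne'
  rw [div_eq_div_iff (by positivity) ?_]
  · ring
  · exact mul_ne_zero (mul_ne_zero hC (prod_factorial_ne_zero u)) (prod_factorial_ne_zero v)

lemma vand (n a b : ℕ) (γ : Fin n → ℕ) (hγ : ∑ i, γ i = a + b) :
    ∑ ab ∈ (Finset.Nat.antidiagonalTuple n a ×ˢ Finset.Nat.antidiagonalTuple n b).filter
        (fun ab => ab.1 + ab.2 = γ),
      (1:ℝ) / ((∏ i, ((ab.1 i).factorial : ℝ)) * ∏ i, ((ab.2 i).factorial : ℝ))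
    = ((a+b).factorial : ℝ) /
        ((a.factorial : ℝ) * (b.factorial : ℝ) * ∏ i, ((γ i).factorial : ℝ)) := by
  have step1 :
      ∑ ab ∈ (Finset.Nat.antidiagonalTuple n a ×ˢ Finset.Nat.antidiagonalTuple n b).filter
          (fun ab => ab.1 + ab.2 = γ),
        (1:ℝ) / ((∏ i, ((ab.1 i).factorial : ℝ)) * ∏ i, ((ab.2 i).factorial : ℝ))
      = ∑ x ∈ Finset.Nat.antidiagonalTuple n a,
          (∏ i, (((γ i).choose (x i) : ℕ) : ℝ)) / ∏ i, (((γ i).factorial : ℕ) : ℝ) := by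
    rw [← Finset.sum_filter_of_ne (s := Finset.Nat.antidiagonalTuple n a)
      (p := fun x => ∀ i, x i ≤ γ i)
      (f := fun x => (∏ i, (((γ i).choose (x i) : ℕ) : ℝ)) / ∏ i, (((γ i).factorial : ℕ) : ℝ))
      ?_]
    · refine Finset.sum_nbij' (fun ab => ab.1) (fun x => (x, γ - x)) ?_ ?_ ?_ ?_ ?_
      · intro ab hab
        simp only [Finset.mem_filter, Finset.mem_product,
          Finset.Nat.mem_antidiagonalTuple] at hab ⊢
        exact ⟨hab.1.1, fun i => le_of_add_le_left (congrFun hab.2 i).le⟩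
      · intro x hx
        simp only [Finset.mem_filter, Finset.mem_product,
          Finset.Nat.mem_antidiagonalTuple] at hx ⊢
        have hadd : x + (γ - x) = γ := by
          funext i
          have := hx.2 i
          simp only [Pi.add_apply, Pi.sub_apply]
          omega
        refine ⟨⟨hx.1, ?_⟩, hadd⟩
        have : ∑ i, x i + ∑ i, (γ - x) i = ∑ i, γ i := by
          rw [← Finset.sum_add_distrib]
          exact Finset.sum_congr rfl fun i _ => by
            have := hx.2 i; simp only [Pi.sub_apply]; omega
        omega
      · intro ab hab
        simp only [Finset.mem_filter, Finset.mem_product] at hab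
        have : γ - ab.1 = ab.2 := by
          funext i
          have := congrFun hab.2 i
          simp only [Pi.sub_apply]
          simp only [Pi.add_apply] at this
          omega
        exact Prod.ext rfl this
      · intro x hx; rfl
      · intro ab hab
        simp only [Finset.mem_filter, Finset.mem_product] at hab
        have h2 : ∀ i, γ i = ab.1 i + ab.2 i := fun i => (congrFun hab.2 i).symm
        rw [term_eq n ab.1 ab.2]
        congr 1 <;> exact Finset.prod_congr rfl fun i _ => by rw [h2 i]
    · intro x hx hne
      by_contra hnot
      push_neg at hnot
      obtain ⟨i, hi⟩ := hnot
      refine hne ?_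
      rw [div_eq_zero_iff]
      left
      exact Finset.prod_eq_zero (Finset.mem_univ i)
        (by rw [Nat.choose_eq_zero_of_lt hi]; simp)
  rw [step1, ← Finset.sum_div]
  have : ∑ x ∈ Finset.Nat.antidiagonalTuple n a, ∏ i, (((γ i).choose (x i) : ℕ) : ℝ)
      = (((a+b).choose a : ℕ) : ℝ) := by
    rw [← hγ, ← choose_sum n a γ]
    push_cast
    rfl
  rw [this, Nat.cast_choose ℝ (Nat.le_add_right a b), Nat.add_sub_cancel_left]
  rw [div_div]
/-- Lemma A7 of Iooss–Lombardi 2005: for a multi-index `γ` with `|γ| = k−1+p`,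
`Σ_{j=1}^{m₀} Σ_{|α|=k, |β|=p, α+β−σ_j=γ} α_j²/(α!β!)
  = (1/(k!p!))(k² + (m₀−1)k)((k−1+p)!/γ!)`. -/
theorem stmt5 (m₀ k p : ℕ) (γ : Fin m₀ → ℕ) (hγ : ∑ i, γ i = k - 1 + p) :
    ∑ j : Fin m₀,
      ∑ ab ∈ (Finset.Nat.antidiagonalTuple m₀ k ×ˢ Finset.Nat.antidiagonalTuple m₀ p).filter
          (fun ab => ab.1 + ab.2 = γ + Pi.single j 1),
        ((ab.1 j : ℝ)) ^ 2 /
          ((∏ i, ((ab.1 i).factorial : ℝ)) * ∏ i, ((ab.2 i).factorial : ℝ)) =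
      1 / ((k.factorial : ℝ) * (p.factorial : ℝ)) * ((k : ℝ) ^ 2 + ((m₀ : ℝ) - 1) * k) *
        (((k - 1 + p).factorial : ℝ) / ∏ i, ((γ i).factorial : ℝ)) := by
  cases k with
  | zero =>
    have hL : ∀ j : Fin m₀,
        ∑ ab ∈ (Finset.Nat.antidiagonalTuple m₀ 0 ×ˢ Finset.Nat.antidiagonalTuple m₀ p).filter
            (fun ab => ab.1 + ab.2 = γ + Pi.single j 1),
          ((ab.1 j : ℝ)) ^ 2 /
            ((∏ i, ((ab.1 i).factorial : ℝ)) * ∏ i, ((ab.2 i).factorial : ℝ)) = 0 := by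
      intro j
      refine Finset.sum_eq_zero fun ab hab => ?_
      simp only [Finset.mem_filter, Finset.mem_product,
        Finset.Nat.antidiagonalTuple_zero_right, Finset.mem_singleton] at hab
      rw [hab.1.1]
      simp
    rw [Finset.sum_congr rfl fun j _ => hL j]
    simp
  | succ k' =>
    have hγ' : ∑ i, γ i = k' + p := by simpa using hγ
    set T := (Finset.Nat.antidiagonalTuple m₀ k' ×ˢ Finset.Nat.antidiagonalTuple m₀ p).filter
        (fun ab => ab.1 + ab.2 = γ) with hTdef
    have hsingle_sum : ∀ j : Fin m₀, ∑ i, Pi.single j 1 i = 1 := by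
      intro j
      rw [Finset.sum_pi_single']
      simp
    have hstep : ∀ j : Fin m₀,
        (∑ ab ∈ (Finset.Nat.antidiagonalTuple m₀ (k'+1) ×ˢ
              Finset.Nat.antidiagonalTuple m₀ p).filter
            (fun ab => ab.1 + ab.2 = γ + Pi.single j 1),
          ((ab.1 j : ℝ)) ^ 2 /
            ((∏ i, ((ab.1 i).factorial : ℝ)) * ∏ i, ((ab.2 i).factorial : ℝ)))
        = ∑ ab ∈ T, ((ab.1 j : ℝ) + 1) /
            ((∏ i, ((ab.1 i).factorial : ℝ)) * ∏ i, ((ab.2 i).factorial : ℝ)) := by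
      intro j
      rw [← Finset.sum_filter_of_ne (p := fun ab => 0 < ab.1 j) (fun ab hab hne => by
        by_contra hnot
        push_neg at hnot
        apply hne
        have hz : ab.1 j = 0 := by omega
        rw [hz]
        simp)]
      refine Finset.sum_nbij' (fun ab => (ab.1 - Pi.single j 1, ab.2))
        (fun cd => (cd.1 + Pi.single j 1, cd.2)) ?_ ?_ ?_ ?_ ?_
      · intro ab hab
        simp only [hTdef, Finset.mem_filter, Finset.mem_product,
          Finset.Nat.mem_antidiagonalTuple] at hab ⊢
        obtain ⟨⟨⟨h1, h2⟩, h3⟩, h4⟩ := hab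
        have hle : ∀ i : Fin m₀, (Pi.single j 1 : Fin m₀ → ℕ) i ≤ ab.1 i := by
          intro i
          rcases eq_or_ne i j with rfl | hij
          · simp only [Pi.single_eq_same]; omega
          · simp [Pi.single_eq_of_ne hij]
        constructor
        constructor
        · have : ∑ i, (ab.1 - (Pi.single j 1 : Fin m₀ → ℕ)) i + ∑ i, (Pi.single j 1 : Fin m₀ → ℕ) i = ∑ i, ab.1 i := by
            rw [← Finset.sum_add_distrib]
            refine Finset.sum_congr rfl fun i _ => ?_
            have := hle i
            simp only [Pi.sub_apply]
            omega
          rw [hsingle_sum j] at this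
          omega
        · exact h2
        · funext i
          have h3i := congrFun h3 i
          have := hle i
          simp only [Pi.add_apply, Pi.sub_apply] at h3i ⊢
          omega
      · intro cd hcd
        simp only [hTdef, Finset.mem_filter, Finset.mem_product,
          Finset.Nat.mem_antidiagonalTuple] at hcd ⊢
        obtain ⟨⟨h1, h2⟩, h3⟩ := hcd
        refine ⟨⟨⟨?_, h2⟩, ?_⟩, ?_⟩
        · simp only [Pi.add_apply]
          rw [Finset.sum_add_distrib, hsingle_sum j, h1]
        · rw [add_right_comm, h3]
        · simp
      · intro ab hab
        simp only [Finset.mem_filter, Finset.mem_product] at hab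
        refine Prod.ext ?_ rfl
        funext i
        have : (Pi.single j 1 : Fin m₀ → ℕ) i ≤ ab.1 i := by
          rcases eq_or_ne i j with rfl | hij
          · simp only [Pi.single_eq_same]; omega
          · simp [Pi.single_eq_of_ne hij]
        simp only [Pi.add_apply, Pi.sub_apply]
        omega
      · intro cd hcd
        refine Prod.ext ?_ rfl
        funext i
        simp only [Pi.add_apply, Pi.sub_apply]
        omega
      · intro ab hab
        dsimp only
        simp only [Finset.mem_filter, Finset.mem_product] at hab
        have hq : 0 < ab.1 j := hab.2
        have hle : ∀ i : Fin m₀, (Pi.single j 1 : Fin m₀ → ℕ) i ≤ ab.1 i := by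
          intro i
          rcases eq_or_ne i j with rfl | hij
          · simp only [Pi.single_eq_same]; omega
          · simp [Pi.single_eq_of_ne hij]
        have hsubj : (ab.1 - (Pi.single j 1 : Fin m₀ → ℕ)) j = ab.1 j - 1 := by
          simp [Pi.sub_apply]
        have e1 : ∏ i, ((ab.1 i).factorial : ℝ)
            = (ab.1 j : ℝ) * ∏ i, (((ab.1 - (Pi.single j 1 : Fin m₀ → ℕ)) i).factorial : ℝ) := by
          rw [← Finset.mul_prod_erase Finset.univ (fun i => ((ab.1 i).factorial : ℝ))
            (Finset.mem_univ j),
            ← Finset.mul_prod_erase Finset.univ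
            (fun i => (((ab.1 - (Pi.single j 1 : Fin m₀ → ℕ)) i).factorial : ℝ)) (Finset.mem_univ j)]
          have herase : ∏ i ∈ Finset.univ.erase j, (((ab.1 - (Pi.single j 1 : Fin m₀ → ℕ)) i).factorial : ℝ)
              = ∏ i ∈ Finset.univ.erase j, ((ab.1 i).factorial : ℝ) := by
            refine Finset.prod_congr rfl fun i hi => ?_
            have hij : i ≠ j := Finset.ne_of_mem_erase hi
            simp [Pi.sub_apply, Pi.single_eq_of_ne hij]
          rw [herase, hsubj, ← mul_assoc]
          congr 1
          have := Nat.mul_factorial_pred hq.ne'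
          exact_mod_cast this.symm
        rw [e1, hsubj]
        have hcast : ((ab.1 j - 1 : ℕ) : ℝ) + 1 = (ab.1 j : ℝ) := by
          have : (ab.1 j - 1) + 1 = ab.1 j := by omega
          exact_mod_cast congrArg (Nat.cast : ℕ → ℝ) this
        rw [hcast]
        have hq' : (ab.1 j : ℝ) ≠ 0 := Nat.cast_ne_zero.mpr hq.ne'
        have hA := prod_factorial_ne_zero (ab.1 - (Pi.single j 1 : Fin m₀ → ℕ))
        have hB := prod_factorial_ne_zero ab.2
        field_simp
    rw [Finset.sum_congr rfl fun j _ => hstep j, Finset.sum_comm]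
    have hterm : ∀ ab ∈ T,
        (∑ j : Fin m₀, ((ab.1 j : ℝ) + 1) /
          ((∏ i, ((ab.1 i).factorial : ℝ)) * ∏ i, ((ab.2 i).factorial : ℝ)))
        = ((k' : ℝ) + m₀) * (1 /
          ((∏ i, ((ab.1 i).factorial : ℝ)) * ∏ i, ((ab.2 i).factorial : ℝ))) := by
      intro ab hab
      simp only [hTdef, Finset.mem_filter, Finset.mem_product,
        Finset.Nat.mem_antidiagonalTuple] at hab
      rw [← Finset.sum_div]
      have : ∑ j : Fin m₀, ((ab.1 j : ℝ) + 1) = (k' : ℝ) + m₀ := by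
        rw [Finset.sum_add_distrib]
        simp only [Finset.sum_const, Finset.card_univ, Fintype.card_fin, nsmul_eq_mul, mul_one]
        congr 1
        exact_mod_cast congrArg (Nat.cast : ℕ → ℝ) hab.1.1
      rw [this]
      rw [mul_one_div]
    rw [Finset.sum_congr rfl hterm, ← Finset.mul_sum, vand m₀ k' p γ hγ']
    have hkk : k' + 1 - 1 + p = k' + p := by omega
    rw [hkk]
    have h1 : ((k' + 1).factorial : ℝ) = ((k' : ℝ) + 1) * (k'.factorial : ℝ) := by
      exact_mod_cast congrArg (Nat.cast : ℕ → ℝ) (Nat.factorial_succ k')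
    have hk'f : (k'.factorial : ℝ) ≠ 0 := Nat.cast_ne_zero.mpr (Nat.factorial_ne_zero _)
    have hpf : (p.factorial : ℝ) ≠ 0 := Nat.cast_ne_zero.mpr (Nat.factorial_ne_zero _)
    have hγf := prod_factorial_ne_zero γ
    push_cast [h1]
    field_simp
    ring
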